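/- arXiv:1804.05658 — 3 statements merged into one kernel-verified Lean document; each statement's English description precedes it below -/
import Mathlib

section
/- Let F, G : D → ℝ³ be C^{2,α} immersions of the closed unit disk (0 < α < 1), and let φ be a C¹ diffeomorphism of D fixing ∂D pointwise such that F = G ∘ φ. Then φ is a C^{2,α} diffeomorphism. -/
open Metric ContinuousLinearMap Set ENNReal NNReal

set_option linter.unusedSectionVars false
set_option maxHeartbeats 1600000000
set_option synthInstance.maxHeartbeats 2000000

noncomputable section




abbrev E2 : Type := EuclideanSpace ℝ (Fin 2)
abbrev E3 : Type := EuclideanSpace ℝ (Fin 3)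

/-- adjoint as a genuine ℝ-CLM -/
def adjCLM : (E2 →L[ℝ] E3) →L[ℝ] (E3 →L[ℝ] E2) :=
  LinearMap.mkContinuous
    { toFun := fun A => ContinuousLinearMap.adjoint A
      map_add' := by intro A B; simp [map_add]
      map_smul' := by intro c A; simp [map_smulₛₗ, starRingEnd_apply, star_trivial] }
    1 (by
      intro A
      simp only [LinearMap.coe_mk, AddHom.coe_mk, one_mul]
      exact le_of_eq ((ContinuousLinearMap.adjoint : (E2 →L[ℝ] E3) ≃ₗᵢ⋆[ℝ] _).norm_map A))

@[simp] lemma adjCLM_apply (A : E2 →L[ℝ] E3) : adjCLM A = ContinuousLinearMap.adjoint A := rfl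

lemma isUnit_adj_comp {A : E2 →L[ℝ] E3} (hA : Function.Injective A) :
    IsUnit (adjCLM A ∘L A) := by
  have hinj : Function.Injective (adjCLM A ∘L A) := by
    intro x y hxy
    have h : (adjCLM A ∘L A) (x - y) = 0 := by
      simp only [map_sub, hxy, sub_self]
    have h2 : (inner ℝ (A (x - y)) (A (x - y)) : ℝ) = 0 := by
      have := ContinuousLinearMap.adjoint_inner_left (𝕜 := ℝ) A (x - y) (A (x - y))
      rw [show (ContinuousLinearMap.adjoint A) (A (x - y)) = 0 from h] at this
      simpa using this.symm
    have h3 : A (x - y) = 0 := by rwa [inner_self_eq_zero] at h2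
    have h4 : x - y = 0 := hA (by simpa using h3)
    exact sub_eq_zero.mp h4
  have hbij : Function.Bijective ((adjCLM A ∘L A) : E2 →ₗ[ℝ] E2) :=
    ⟨hinj, (LinearMap.injective_iff_surjective).mp hinj⟩
  let le : E2 ≃ₗ[ℝ] E2 := LinearEquiv.ofBijective _ hbij
  let ce : E2 ≃L[ℝ] E2 := le.toContinuousLinearEquiv
  refine isUnit_iff_exists.mpr ⟨ce.symm.toContinuousLinearMap, ?_, ?_⟩
  · refine ContinuousLinearMap.ext fun x => ?_
    have h5 : (adjCLM A ∘L A) (ce.symm x) = ce (ce.symm x) := rfl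
    calc ((adjCLM A ∘L A) * ce.symm.toContinuousLinearMap) x
        = (adjCLM A ∘L A) (ce.symm x) := rfl
      _ = ce (ce.symm x) := h5
      _ = x := ce.apply_symm_apply x
      _ = (1 : E2 →L[ℝ] E2) x := rfl
  · refine ContinuousLinearMap.ext fun x => ?_
    have h5 : (adjCLM A ∘L A) x = ce x := rfl
    calc (ce.symm.toContinuousLinearMap * (adjCLM A ∘L A)) x
        = ce.symm ((adjCLM A ∘L A) x) := rfl
      _ = ce.symm (ce x) := by rw [h5]
      _ = x := ce.symm_apply_apply x
      _ = (1 : E2 →L[ℝ] E2) x := rfl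

/-- left pseudo-inverse -/
def Pinv (A : E2 →L[ℝ] E3) : E3 →L[ℝ] E2 :=
  (Ring.inverse (adjCLM A ∘L A)) ∘L adjCLM A

lemma Pinv_comp {A : E2 →L[ℝ] E3} (hA : Function.Injective A) :
    (Pinv A) ∘L A = ContinuousLinearMap.id ℝ E2 := by
  have : (Pinv A) ∘L A = Ring.inverse (adjCLM A ∘L A) * (adjCLM A ∘L A) := by
    simp [Pinv, ContinuousLinearMap.mul_def, ContinuousLinearMap.comp_assoc]
  rw [this, Ring.inverse_mul_cancel _ (isUnit_adj_comp hA)]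
  rfl

lemma contDiffAt_Pinv {A : E2 →L[ℝ] E3} (hA : Function.Injective A) (n : ℕ) :
    ContDiffAt ℝ n Pinv A := by
  have h1 : ContDiff ℝ n (fun B : E2 →L[ℝ] E3 => adjCLM B ∘L B) :=
    (adjCLM.contDiff.comp contDiff_id).clm_comp contDiff_id
  have h2 : ContDiffAt ℝ n (Ring.inverse : (E2 →L[ℝ] E2) → (E2 →L[ℝ] E2))
      (adjCLM A ∘L A) := by
    obtain ⟨u, hu⟩ := isUnit_adj_comp hA
    rw [← hu]
    exact contDiffAt_ringInverse ℝ u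
  have h3 : ContDiffAt ℝ n (Ring.inverse ∘ (fun B : E2 →L[ℝ] E3 => adjCLM B ∘L B)) A :=
    ContDiffAt.comp (f := fun B : E2 →L[ℝ] E3 => adjCLM B ∘L B) A h2 h1.contDiffAt
  exact ContDiffAt.clm_comp h3 (adjCLM.contDiff.contDiffAt)





abbrev DD : Set E2 := closedBall 0 1

lemma uniqueDiffOn_DD : UniqueDiffOn ℝ DD :=
  uniqueDiffOn_convex (convex_closedBall _ _)
    (by rw [interior_closedBall (0 : E2) one_ne_zero]; exact ⟨0, mem_ball_self one_pos⟩)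

lemma isCompact_DD : IsCompact DD := isCompact_closedBall _ _

lemma convex_DD : Convex ℝ DD := convex_closedBall _ _

lemma edist_le_two_DD {x y : E2} (hx : x ∈ DD) (hy : y ∈ DD) : edist x y ≤ 2 := by
  have h : dist x y ≤ 2 := by
    have := dist_triangle x (0 : E2) y
    simp only [mem_closedBall, dist_zero_right] at hx hy
    rw [dist_zero_left] at this
    calc dist x y ≤ ‖x‖ + ‖y‖ := by simpa [dist_eq_norm] using this
      _ ≤ 2 := by linarith
  rw [edist_dist]
  calc ENNReal.ofReal (dist x y) ≤ ENNReal.ofReal 2 := ENNReal.ofReal_le_ofReal h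
    _ = 2 := by norm_num

variable {Y Z W : Type*} [NormedAddCommGroup Y] [NormedSpace ℝ Y]
  [NormedAddCommGroup Z] [NormedSpace ℝ Z] [NormedAddCommGroup W] [NormedSpace ℝ W]

section holder

variable {α : NNReal}

/-- Lipschitz implies Hölder on a set of diameter ≤ 2. -/
lemma lipschitzOnWith_DD.holder (hα0 : 0 < α) (hα1 : (α : ℝ) ≤ 1) {K : NNReal} {f : E2 → Y}
    (hf : LipschitzOnWith K f DD) :
    HolderOnWith (2 * K) α f DD := by
  intro x hx y hy
  have hd2 : edist x y ≤ 2 := edist_le_two_DD hx hy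
  have hα0' : (0 : ℝ) < α := hα0
  have key : edist x y ≤ 2 * edist x y ^ (α : ℝ) := by
    rcases eq_or_ne (edist x y) 0 with h0 | h0
    · simp [h0]
    · have hne : edist x y ≠ ⊤ := (lt_of_le_of_lt hd2 (by norm_num)).ne
      have hsplit : edist x y = edist x y ^ (α : ℝ) * edist x y ^ (1 - (α : ℝ)) := by
        rw [← ENNReal.rpow_add _ _ h0 hne]; norm_num
      nth_rewrite 1 [hsplit]
      have h1 : edist x y ^ (1 - (α : ℝ)) ≤ (2 : ℝ≥0∞) ^ (1 - (α : ℝ)) :=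
        ENNReal.rpow_le_rpow hd2 (by linarith)
      have h2 : (2 : ℝ≥0∞) ^ (1 - (α : ℝ)) ≤ 2 := by
        calc (2 : ℝ≥0∞) ^ (1 - (α : ℝ)) ≤ (2 : ℝ≥0∞) ^ (1 : ℝ) :=
              ENNReal.rpow_le_rpow_of_exponent_le (by norm_num) (by linarith)
          _ = 2 := ENNReal.rpow_one 2
      calc edist x y ^ (α : ℝ) * edist x y ^ (1 - (α : ℝ))
          ≤ edist x y ^ (α : ℝ) * 2 := mul_le_mul' le_rfl (le_trans h1 h2)
        _ = 2 * edist x y ^ (α : ℝ) := mul_comm _ _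
  calc edist (f x) (f y) ≤ K * edist x y := hf hx hy
    _ ≤ K * (2 * edist x y ^ (α : ℝ)) := mul_le_mul' le_rfl key
    _ = ↑(2 * K) * edist x y ^ (α : ℝ) := by
        push_cast
        ring

/-- C¹ on DD implies Lipschitz on DD. -/
lemma contDiffOn_DD.lipschitz {f : E2 → Y} (hf : ContDiffOn ℝ 1 f DD) :
    ∃ K, LipschitzOnWith K f DD := by
  have hdiff : DifferentiableOn ℝ f DD := hf.differentiableOn one_ne_zero
  have hcont : ContinuousOn (fderivWithin ℝ f DD) DD :=
    hf.continuousOn_fderivWithin uniqueDiffOn_DD le_rfl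
  obtain ⟨C, hC⟩ := isCompact_DD.exists_bound_of_continuousOn hcont
  refine ⟨⟨max C 0, le_max_right _ _⟩, convex_DD.lipschitzOnWith_of_nnnorm_fderivWithin_le hdiff ?_⟩
  intro x hx
  refine NNReal.coe_le_coe.mp ?_
  calc ((‖fderivWithin ℝ f DD x‖₊ : ℝ)) = ‖fderivWithin ℝ f DD x‖ := rfl
    _ ≤ C := hC x hx
    _ ≤ max C 0 := le_max_left _ _

/-- bounded nnnorm on DD from continuity -/
lemma bound_of_continuousOn_DD {f : E2 → Y} (hf : ContinuousOn f DD) :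
    ∃ M : NNReal, ∀ x ∈ DD, ‖f x‖₊ ≤ M := by
  obtain ⟨C, hC⟩ := isCompact_DD.exists_bound_of_continuousOn hf
  refine ⟨⟨max C 0, le_max_right _ _⟩, fun x hx => ?_⟩
  refine NNReal.coe_le_coe.mp ?_
  calc ((‖f x‖₊ : ℝ)) = ‖f x‖ := rfl
    _ ≤ C := hC x hx
    _ ≤ max C 0 := le_max_left _ _

lemma HolderOnWith.add_DD {C C' : NNReal} {f g : E2 → Y}
    (hf : HolderOnWith C α f DD) (hg : HolderOnWith C' α g DD) :
    HolderOnWith (C + C') α (fun x => f x + g x) DD := by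
  intro x hx y hy
  calc edist (f x + g x) (f y + g y) ≤ edist (f x) (f y) + edist (g x) (g y) :=
        edist_add_add_le _ _ _ _
    _ ≤ C * edist x y ^ (α : ℝ) + C' * edist x y ^ (α : ℝ) :=
        add_le_add (hf.edist_le hx hy) (hg.edist_le hx hy)
    _ = ↑(C + C') * edist x y ^ (α : ℝ) := by push_cast; ring

/-- Hölder of pointwise composition of CLM-valued maps. -/
lemma HolderOnWith.clm_comp_DD {Cu Cv Mu Mv : NNReal}
    {u : E2 → (Z →L[ℝ] W)} {v : E2 → (Y →L[ℝ] Z)}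
    (hu : HolderOnWith Cu α u DD) (hv : HolderOnWith Cv α v DD)
    (hMu : ∀ x ∈ DD, ‖u x‖₊ ≤ Mu) (hMv : ∀ x ∈ DD, ‖v x‖₊ ≤ Mv) :
    HolderOnWith (Cu * Mv + Mu * Cv) α (fun x => (u x).comp (v x)) DD := by
  intro x hx y hy
  have key : ‖(u x).comp (v x) - (u y).comp (v y)‖₊
      ≤ ‖u x - u y‖₊ * Mv + Mu * ‖v x - v y‖₊ := by
    have hdecomp : (u x).comp (v x) - (u y).comp (v y)
        = (u x - u y).comp (v x) + (u y).comp (v x - v y) := by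
      simp only [ContinuousLinearMap.sub_comp, ContinuousLinearMap.comp_sub]
      abel
    rw [hdecomp]
    calc ‖(u x - u y).comp (v x) + (u y).comp (v x - v y)‖₊
        ≤ ‖(u x - u y).comp (v x)‖₊ + ‖(u y).comp (v x - v y)‖₊ := nnnorm_add_le _ _
      _ ≤ ‖u x - u y‖₊ * ‖v x‖₊ + ‖u y‖₊ * ‖v x - v y‖₊ :=
          add_le_add (opNNNorm_comp_le _ _) (opNNNorm_comp_le _ _)
      _ ≤ ‖u x - u y‖₊ * Mv + Mu * ‖v x - v y‖₊ :=
          add_le_add (mul_le_mul' le_rfl (hMv x hx)) (mul_le_mul' (hMu y hy) le_rfl)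
  rw [edist_nndist, nndist_eq_nnnorm]
  calc (↑‖(u x).comp (v x) - (u y).comp (v y)‖₊ : ℝ≥0∞)
      ≤ ↑(‖u x - u y‖₊ * Mv + Mu * ‖v x - v y‖₊) := by exact_mod_cast ENNReal.coe_le_coe.mpr key
    _ = (↑‖u x - u y‖₊ : ℝ≥0∞) * Mv + (Mu : ℝ≥0∞) * ↑‖v x - v y‖₊ := by push_cast; ring
    _ = edist (u x) (u y) * Mv + (Mu : ℝ≥0∞) * edist (v x) (v y) := by
        rw [edist_nndist, nndist_eq_nnnorm, edist_nndist, nndist_eq_nnnorm]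
    _ ≤ (Cu * edist x y ^ (α : ℝ)) * Mv + (Mu : ℝ≥0∞) * (Cv * edist x y ^ (α : ℝ)) := by
        exact add_le_add (mul_le_mul' (hu.edist_le hx hy) le_rfl) (mul_le_mul' le_rfl (hv.edist_le hx hy))
    _ = ↑(Cu * Mv + Mu * Cv) * edist x y ^ (α : ℝ) := by push_cast; ring

/-- postcomposition with a fixed CLM preserves Hölder -/
lemma HolderOnWith.clm_apply_DD {C : NNReal} {L : Y →L[ℝ] Z} {f : E2 → Y}
    (hf : HolderOnWith C α f DD) :
    HolderOnWith (‖L‖₊ * C) α (fun x => L (f x)) DD := by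
  intro x hx y hy
  calc edist (L (f x)) (L (f y)) ≤ ↑‖L‖₊ * edist (f x) (f y) := L.lipschitz.edist_le_mul _ _
    _ ≤ ↑‖L‖₊ * (C * edist x y ^ (α : ℝ)) := mul_le_mul' le_rfl (hf.edist_le hx hy)
    _ = ↑(‖L‖₊ * C) * edist x y ^ (α : ℝ) := by push_cast; ring

end holder






variable {Y Z : Type*} [NormedAddCommGroup Y] [NormedSpace ℝ Y]
  [NormedAddCommGroup Z] [NormedSpace ℝ Z]

lemma nnnorm_isom_comp (e : Y ≃ₗᵢ[ℝ] Z) (T : E2 →L[ℝ] Y) :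
    ‖((e.toContinuousLinearEquiv : Y →L[ℝ] Z)).comp T‖₊ = ‖T‖₊ := by
  apply NNReal.eq
  show ‖((e.toContinuousLinearEquiv : Y →L[ℝ] Z)).comp T‖ = ‖T‖
  refine le_antisymm (ContinuousLinearMap.opNorm_le_bound _ (norm_nonneg T) fun x => ?_)
    (ContinuousLinearMap.opNorm_le_bound _ (norm_nonneg _) fun x => ?_)
  · calc ‖(((e.toContinuousLinearEquiv : Y →L[ℝ] Z)).comp T) x‖ = ‖e (T x)‖ := rfl
      _ = ‖T x‖ := e.norm_map _
      _ ≤ ‖T‖ * ‖x‖ := T.le_opNorm x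
  · calc ‖T x‖ = ‖e (T x)‖ := (e.norm_map _).symm
      _ = ‖(((e.toContinuousLinearEquiv : Y →L[ℝ] Z)).comp T) x‖ := rfl
      _ ≤ ‖((e.toContinuousLinearEquiv : Y →L[ℝ] Z)).comp T‖ * ‖x‖ :=
          ContinuousLinearMap.le_opNorm _ x

lemma edist_isom_comp (e : Y ≃ₗᵢ[ℝ] Z) (T S : E2 →L[ℝ] Y) :
    edist (((e.toContinuousLinearEquiv : Y →L[ℝ] Z)).comp T)
      (((e.toContinuousLinearEquiv : Y →L[ℝ] Z)).comp S) = edist T S := by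
  rw [edist_nndist, nndist_eq_nnnorm, edist_nndist, nndist_eq_nnnorm, ← ContinuousLinearMap.comp_sub]
  rw [nnnorm_isom_comp]

lemma edist_iter2 (f : E2 → Y) {x y : E2} (hx : x ∈ DD) (hy : y ∈ DD) :
    edist (iteratedFDerivWithin ℝ 2 f DD x) (iteratedFDerivWithin ℝ 2 f DD y)
      = edist (fderivWithin ℝ (fderivWithin ℝ f DD) DD x)
          (fderivWithin ℝ (fderivWithin ℝ f DD) DD y) := by
  set f1 := fderivWithin ℝ f DD with hf1
  set it1 := iteratedFDerivWithin ℝ 1 f DD with hit1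
  set e1 := continuousMultilinearCurryFin1 ℝ E2 Y with he1
  have hEq : Set.EqOn it1 (⇑e1.symm ∘ f1) DD := by
    intro z hz
    ext m
    rw [hit1]
    rw [iteratedFDerivWithin_one_apply (uniqueDiffOn_DD z hz)]
    simp [he1]
    rfl
  have hstep : ∀ z ∈ DD, fderivWithin ℝ it1 DD z
      = ((e1.symm.toContinuousLinearEquiv :
          (E2 →L[ℝ] Y) →L[ℝ] (ContinuousMultilinearMap ℝ (fun _ : Fin 1 => E2) Y))).comp
        (fderivWithin ℝ f1 DD z) := by
    intro z hz
    rw [fderivWithin_congr hEq (hEq hz)]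
    exact (e1.symm.toContinuousLinearEquiv).comp_fderivWithin (uniqueDiffOn_DD z hz)
  have h2 : iteratedFDerivWithin ℝ 2 f DD =
      (⇑(continuousMultilinearCurryLeftEquiv ℝ (fun _ : Fin 2 => E2) Y).symm) ∘
        fderivWithin ℝ it1 DD := iteratedFDerivWithin_succ_eq_comp_left
  rw [h2]
  simp only [Function.comp_apply]
  rw [(continuousMultilinearCurryLeftEquiv ℝ (fun _ : Fin 2 => E2) Y).symm.isometry.edist_eq]
  rw [hstep x hx, hstep y hy, edist_isom_comp]


lemma HolderOnWith.congr_DD {α C : NNReal} {Y : Type*} [NormedAddCommGroup Y]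
    {f g : E2 → Y} (h : HolderOnWith C α f DD) (he : ∀ x ∈ DD, f x = g x) :
    HolderOnWith C α g DD := by
  intro x hx y hy
  rw [← he x hx, ← he y hy]
  exact h.edist_le hx hy


def HB {Y : Type*} [NormedAddCommGroup Y] [NormedSpace ℝ Y] (α : NNReal) (f : E2 → Y) : Prop :=
  ∃ C M : NNReal, HolderOnWith C α f DD ∧ ∀ x ∈ DD, ‖f x‖₊ ≤ M

section HB
variable {Y Z W : Type*} [NormedAddCommGroup Y] [NormedSpace ℝ Y]
  [NormedAddCommGroup Z] [NormedSpace ℝ Z] [NormedAddCommGroup W] [NormedSpace ℝ W]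
  {α : NNReal}

lemma HB.holder {f : E2 → Y} (h : HB α f) : ∃ C, HolderOnWith C α f DD := by
  obtain ⟨C, M, h1, _⟩ := h; exact ⟨C, h1⟩

lemma HB.of_holder {C : NNReal} {f : E2 → Y} (h : HolderOnWith C α f DD)
    (hc : ContinuousOn f DD) : HB α f := by
  obtain ⟨M, hM⟩ := bound_of_continuousOn_DD hc
  exact ⟨C, M, h, hM⟩

lemma HB.of_contDiffOn (hα0 : 0 < α) (hα1 : (α : ℝ) ≤ 1) {f : E2 → Y}
    (hf : ContDiffOn ℝ 1 f DD) : HB α f := by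
  obtain ⟨K, hK⟩ := contDiffOn_DD.lipschitz hf
  exact HB.of_holder (lipschitzOnWith_DD.holder hα0 hα1 hK) hf.continuousOn

lemma HB.add {f g : E2 → Y} (hf : HB α f) (hg : HB α g) : HB α (fun x => f x + g x) := by
  obtain ⟨C, M, h1, h2⟩ := hf
  obtain ⟨C', M', h1', h2'⟩ := hg
  refine ⟨C + C', M + M', HolderOnWith.add_DD h1 h1', fun x hx => ?_⟩
  exact le_trans (nnnorm_add_le _ _) (add_le_add (h2 x hx) (h2' x hx))

lemma HB.clm_comp {u : E2 → (Z →L[ℝ] W)} {v : E2 → (Y →L[ℝ] Z)}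
    (hu : HB α u) (hv : HB α v) : HB α (fun x => (u x).comp (v x)) := by
  obtain ⟨Cu, Mu, hu1, hu2⟩ := hu
  obtain ⟨Cv, Mv, hv1, hv2⟩ := hv
  refine ⟨Cu * Mv + Mu * Cv, Mu * Mv, HolderOnWith.clm_comp_DD hu1 hv1 hu2 hv2, fun x hx => ?_⟩
  exact le_trans (opNNNorm_comp_le _ _) (mul_le_mul' (hu2 x hx) (hv2 x hx))

lemma HB.clm_apply {f : E2 → Y} (L : Y →L[ℝ] Z) (hf : HB α f) : HB α (fun x => L (f x)) := by
  obtain ⟨C, M, h1, h2⟩ := hf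
  refine ⟨‖L‖₊ * C, ‖L‖₊ * M, HolderOnWith.clm_apply_DD h1, fun x hx => ?_⟩
  exact le_trans (L.le_opNNNorm _) (mul_le_mul' le_rfl (h2 x hx))

end HB





abbrev TA := E2 →L[ℝ] E2
abbrev TB := E2 →L[ℝ] E3
abbrev TBt := E3 →L[ℝ] E2

instance iA1 : NormedAddCommGroup TA := inferInstance
instance iA2 : NormedSpace ℝ TA := inferInstance
instance iB1 : NormedAddCommGroup TB := inferInstance
instance iB2 : NormedSpace ℝ TB := inferInstance
instance iC1 : NormedAddCommGroup TBt := inferInstance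
instance iC2 : NormedSpace ℝ TBt := inferInstance
instance iL11 : NormedAddCommGroup (E2 →L[ℝ] TA) := inferInstance
instance iL12 : NormedSpace ℝ (E2 →L[ℝ] TA) := inferInstance
instance iL21 : NormedAddCommGroup (E2 →L[ℝ] TB) := inferInstance
instance iL22 : NormedSpace ℝ (E2 →L[ℝ] TB) := inferInstance
instance iL31 : NormedAddCommGroup (E2 →L[ℝ] TBt) := inferInstance
instance iL32 : NormedSpace ℝ (E2 →L[ℝ] TBt) := inferInstance
instance iM11 : NormedAddCommGroup (TB →L[ℝ] TBt) := inferInstance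
instance iM12 : NormedSpace ℝ (TB →L[ℝ] TBt) := inferInstance
instance iM21 : NormedAddCommGroup (TB →L[ℝ] TA) := inferInstance
instance iM22 : NormedSpace ℝ (TB →L[ℝ] TA) := inferInstance
instance iM31 : NormedAddCommGroup (TBt →L[ℝ] TA) := inferInstance
instance iM32 : NormedSpace ℝ (TBt →L[ℝ] TA) := inferInstance
instance iN11 : NormedAddCommGroup (TBt →L[ℝ] (TB →L[ℝ] TA)) := inferInstance
instance iN12 : NormedSpace ℝ (TBt →L[ℝ] (TB →L[ℝ] TA)) := inferInstance
instance iN21 : NormedAddCommGroup (TB →L[ℝ] (TBt →L[ℝ] TA)) := inferInstance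
instance iN22 : NormedSpace ℝ (TB →L[ℝ] (TBt →L[ℝ] TA)) := inferInstance

lemma main_bootstrap {α : NNReal} (hα0 : 0 < α) (hα1 : (α : ℝ) ≤ 1)
    {F G : E2 → E3} {φ : E2 → E2}
    (hF : ContDiffOn ℝ 2 F DD) (hG : ContDiffOn ℝ 2 G DD)
    {CF2 : NNReal} (hFα2 : HolderOnWith CF2 α (fderivWithin ℝ (fderivWithin ℝ F DD) DD) DD)
    {CG2 : NNReal} (hGα2 : HolderOnWith CG2 α (fderivWithin ℝ (fderivWithin ℝ G DD) DD) DD)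
    (hGimm : ∀ p ∈ DD, Function.Injective (fderivWithin ℝ G DD p))
    (hφ : ContDiffOn ℝ 1 φ DD) (hφD : Set.MapsTo φ DD DD)
    (hFG : ∀ p ∈ DD, F p = G (φ p)) :
    ContDiffOn ℝ 2 φ DD ∧
      ∃ C, HolderOnWith C α (fderivWithin ℝ (fderivWithin ℝ φ DD) DD) DD := by
  have h2eq : (2 : WithTop ℕ∞) = 1 + 1 := by norm_num
  set G' := fderivWithin ℝ G DD with hG'def
  set F' := fderivWithin ℝ F DD with hF'def
  set φ' := fderivWithin ℝ φ DD with hφ'def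
  set G'' := fderivWithin ℝ G' DD with hG''def
  set F'' := fderivWithin ℝ F' DD with hF''def
  have hG'C1 : ContDiffOn ℝ 1 G' DD :=
    ((contDiffOn_succ_iff_fderivWithin uniqueDiffOn_DD).mp (hG.of_le (le_of_eq h2eq))).2.2
  have hF'C1 : ContDiffOn ℝ 1 F' DD :=
    ((contDiffOn_succ_iff_fderivWithin uniqueDiffOn_DD).mp (hF.of_le (le_of_eq h2eq))).2.2
  have hφdiff : DifferentiableOn ℝ φ DD := hφ.differentiableOn one_ne_zero
  have hGdiff : DifferentiableOn ℝ G DD := hG.differentiableOn (by norm_num)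
  have hFdiff : DifferentiableOn ℝ F DD := hF.differentiableOn (by norm_num)
  have hG'diff : DifferentiableOn ℝ G' DD := hG'C1.differentiableOn one_ne_zero
  have hF'diff : DifferentiableOn ℝ F' DD := hF'C1.differentiableOn one_ne_zero
  -- chain rule
  have key : ∀ p ∈ DD, F' p = (G' (φ p)).comp (φ' p) := by
    intro p hp
    have h1 : F' p = fderivWithin ℝ (G ∘ φ) DD p := by
      rw [hF'def]
      exact fderivWithin_congr (fun z hz => hFG z hz) (hFG p hp)
    rw [h1]
    exact fderivWithin_comp p (hGdiff _ (hφD hp)) (hφdiff p hp) hφD (uniqueDiffOn_DD p hp)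
  set q : E2 → (E3 →L[ℝ] E2) := fun p => Pinv (G' (φ p)) with hqdef
  have hφ'eq : ∀ p ∈ DD, φ' p = (q p).comp (F' p) := by
    intro p hp
    rw [key p hp, ← ContinuousLinearMap.comp_assoc, hqdef]
    rw [Pinv_comp (hGimm _ (hφD hp))]
    simp
  -- q is C¹
  have hG'φ : ContDiffOn ℝ 1 (fun p => G' (φ p)) DD := by
    have := hG'C1.comp hφ hφD
    exact this
  have hq : ContDiffOn ℝ 1 q DD := by
    intro p hp
    have hPinv : ContDiffAt ℝ 1 Pinv (G' (φ p)) := contDiffAt_Pinv (hGimm _ (hφD hp)) 1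
    have : ContDiffWithinAt ℝ 1 (Pinv ∘ fun z => G' (φ z)) DD p :=
      hPinv.comp_contDiffWithinAt p (hG'φ p hp)
    exact this
  set Hfun : E2 → (E2 →L[ℝ] E2) := fun p => (q p).comp (F' p) with hHdef
  have hH : ContDiffOn ℝ 1 Hfun DD := hq.clm_comp hF'C1
  have hφ'C1 : ContDiffOn ℝ 1 φ' DD := hH.congr hφ'eq
  have hφC2 : ContDiffOn ℝ 2 φ DD := by
    rw [h2eq]
    refine (contDiffOn_succ_iff_fderivWithin uniqueDiffOn_DD).mpr
      ⟨hφdiff, fun h => by simp at h, hφ'C1⟩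
  refine ⟨hφC2, ?_⟩
  -- Hölder part
  have hφ'diff : DifferentiableOn ℝ φ' DD := hφ'C1.differentiableOn one_ne_zero
  set DPq : E2 → ((E2 →L[ℝ] E3) →L[ℝ] (E3 →L[ℝ] E2)) :=
    fun p => fderiv ℝ Pinv (G' (φ p)) with hDPqdef
  have hDPq : ContDiffOn ℝ 1 DPq DD := by
    intro p hp
    have hPinv2 : ContDiffAt ℝ 2 Pinv (G' (φ p)) := contDiffAt_Pinv (hGimm _ (hφD hp)) 2
    have hfd : ContDiffAt ℝ 1 (fderiv ℝ Pinv) (G' (φ p)) :=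
      hPinv2.fderiv_right (by norm_num)
    have : ContDiffWithinAt ℝ 1 ((fderiv ℝ Pinv) ∘ fun z => G' (φ z)) DD p :=
      hfd.comp_contDiffWithinAt p (hG'φ p hp)
    exact this
  obtain ⟨Kφ, hφLip⟩ := contDiffOn_DD.lipschitz hφ
  have hb_φ' : HB α φ' := HB.of_contDiffOn hα0 hα1 hφ'C1
  have hb_q : HB α q := HB.of_contDiffOn hα0 hα1 hq
  have hb_F' : HB α F' := HB.of_contDiffOn hα0 hα1 hF'C1
  have hb_DPq : HB α DPq := HB.of_contDiffOn hα0 hα1 hDPq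
  have hb_F'' : HB α F'' :=
    HB.of_holder hFα2 (hF'C1.continuousOn_fderivWithin uniqueDiffOn_DD le_rfl)
  have hb_G''φ : HB α (fun p => G'' (φ p)) := by
    refine HB.of_holder (C := CG2 * Kφ ^ (α : ℝ)) ?_
      ((hG'C1.continuousOn_fderivWithin uniqueDiffOn_DD le_rfl).comp hφ.continuousOn hφD)
    have := hGα2.comp (hφLip.holderOnWith) hφD
    rw [mul_one] at this
    exact this
  set q1 : E2 → (E2 →L[ℝ] (E3 →L[ℝ] E2)) :=
    fun p => (DPq p).comp ((G'' (φ p)).comp (φ' p)) with hq1def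
  have hq1deriv : ∀ p ∈ DD, HasFDerivWithinAt q (q1 p) DD p := by
    intro p hp
    have ha : HasFDerivAt Pinv (DPq p) (G' (φ p)) :=
      (((contDiffAt_Pinv (hGimm _ (hφD hp)) 1)).differentiableAt (by norm_num)).hasFDerivAt
    have hb : HasFDerivWithinAt (fun z => G' (φ z)) ((G'' (φ p)).comp (φ' p)) DD p :=
      HasFDerivWithinAt.comp p ((hG'diff _ (hφD hp)).hasFDerivWithinAt)
        ((hφdiff p hp).hasFDerivWithinAt) hφD
    exact ha.comp_hasFDerivWithinAt p hb
  have hb_q1 : HB α q1 := hb_DPq.clm_comp (hb_G''φ.clm_comp hb_φ')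
  set cL := ContinuousLinearMap.compL ℝ E2 E3 E2 with hcLdef
  have hb_t1 : HB α (fun p => (cL (q p)).comp (F'' p)) := (hb_q.clm_apply cL).clm_comp hb_F''
  have hb_t2 : HB α (fun p => (cL.flip (F' p)).comp (q1 p)) :=
    (hb_F'.clm_apply cL.flip).clm_comp hb_q1
  have hb_sum := hb_t1.add hb_t2
  obtain ⟨C, M, hHold, -⟩ := hb_sum
  refine ⟨C, HolderOnWith.congr_DD hHold ?_⟩
  intro p hp
  have hHderiv : HasFDerivWithinAt Hfun
      ((cL (q p)).comp (F'' p) + (cL.flip (F' p)).comp (q1 p)) DD p :=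
    HasFDerivWithinAt.clm_comp (hq1deriv p hp) ((hF'diff p hp).hasFDerivWithinAt)
  have e1 : fderivWithin ℝ φ' DD p = fderivWithin ℝ Hfun DD p :=
    fderivWithin_congr hφ'eq (hφ'eq p hp)
  rw [hHderiv.fderivWithin (uniqueDiffOn_DD p hp)] at e1
  exact e1.symm

end

/-- If `F, G : D → ℝ³` are `C^{2,α}` immersions of the closed unit disk
(`0 < α < 1`) and `φ` is a `C¹` diffeomorphism of `D` fixing `∂D` pointwise with
`F = G ∘ φ` on `D`, then `φ` (and its inverse `ψ`) is a `C^{2,α}` diffeomorphism. -/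
theorem stmt_0 (α : NNReal) (hα0 : 0 < α) (hα1 : (α : ℝ) < 1)
    (F G : EuclideanSpace ℝ (Fin 2) → EuclideanSpace ℝ (Fin 3))
    (φ ψ : EuclideanSpace ℝ (Fin 2) → EuclideanSpace ℝ (Fin 2))
    (D : Set (EuclideanSpace ℝ (Fin 2)))
    (hD : D = closedBall 0 1)
    (hF : ContDiffOn ℝ 2 F D)
    (hFα : ∃ C, HolderOnWith C α (iteratedFDerivWithin ℝ 2 F D) D)
    (hFimm : ∀ p ∈ D, Function.Injective (fderivWithin ℝ F D p))
    (hG : ContDiffOn ℝ 2 G D)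
    (hGα : ∃ C, HolderOnWith C α (iteratedFDerivWithin ℝ 2 G D) D)
    (hGimm : ∀ p ∈ D, Function.Injective (fderivWithin ℝ G D p))
    (hφ : ContDiffOn ℝ 1 φ D) (hψ : ContDiffOn ℝ 1 ψ D)
    (hφD : Set.MapsTo φ D D) (hψD : Set.MapsTo ψ D D)
    (hinv : Set.InvOn ψ φ D D)
    (hbd : ∀ p ∈ sphere (0 : EuclideanSpace ℝ (Fin 2)) 1, φ p = p)
    (hFG : ∀ p ∈ D, F p = G (φ p)) :
    ContDiffOn ℝ 2 φ D ∧ (∃ C, HolderOnWith C α (iteratedFDerivWithin ℝ 2 φ D) D) ∧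
    ContDiffOn ℝ 2 ψ D ∧ (∃ C, HolderOnWith C α (iteratedFDerivWithin ℝ 2 ψ D) D) := by
  subst hD
  have hα1' : (α : ℝ) ≤ 1 := le_of_lt hα1
  obtain ⟨CF, hCF⟩ := hFα
  obtain ⟨CG, hCG⟩ := hGα
  have hFα2 : HolderOnWith CF α (fderivWithin ℝ (fderivWithin ℝ F DD) DD) DD := by
    intro x hx y hy
    rw [← edist_iter2 F hx hy]
    exact hCF.edist_le hx hy
  have hGα2 : HolderOnWith CG α (fderivWithin ℝ (fderivWithin ℝ G DD) DD) DD := by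
    intro x hx y hy
    rw [← edist_iter2 G hx hy]
    exact hCG.edist_le hx hy
  have hψFG : ∀ p ∈ DD, G p = F (ψ p) := by
    intro p hp
    have h := hFG (ψ p) (hψD hp)
    rw [hinv.2 hp] at h
    exact h.symm
  obtain ⟨hφ2, Cφ, hφH⟩ := main_bootstrap hα0 hα1' hF hG hFα2 hGα2 hGimm hφ hφD hFG
  obtain ⟨hψ2, Cψ, hψH⟩ := main_bootstrap hα0 hα1' hG hF hGα2 hFα2 hFimm hψ hψD hψFG
  refine ⟨hφ2, ⟨Cφ, ?_⟩, hψ2, ⟨Cψ, ?_⟩⟩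
  · intro x hx y hy
    rw [edist_iter2 φ hx hy]
    exact hφH.edist_le hx hy
  · intro x hx y hy
    rw [edist_iter2 ψ hx hy]
    exact hψH.edist_le hx hy
end

section
/- A local C¹ diffeomorphism Y : D → ℝ² of the closed unit disk that restricts to the identity on ∂D is a global diffeomorphism of D onto D. -/
open Metric Set

local notation "E2" => EuclideanSpace ℝ (Fin 2)

/-- Local homeomorphism structure at interior points. -/
theorem localStruct (Y : E2 → E2) (hY : ContDiffOn ℝ 1 Y (closedBall 0 1))
    (hloc : ∀ p ∈ closedBall (0 : E2) 1, Function.Bijective (fderivWithin ℝ Y (closedBall 0 1) p))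
    (x : E2) (hx : x ∈ ball (0:E2) 1) :
    ∃ V : Set E2, IsOpen V ∧ x ∈ V ∧ V ⊆ ball (0:E2) 1 ∧ Set.InjOn Y V ∧
      (∀ W ⊆ V, IsOpen W → IsOpen (Y '' W)) := by
  have hnhds : closedBall (0:E2) 1 ∈ nhds x := Filter.mem_of_superset (isOpen_ball.mem_nhds hx) ball_subset_closedBall
  have hca : ContDiffAt ℝ 1 Y x := hY.contDiffAt hnhds
  have hdiff : DifferentiableAt ℝ Y x := hca.differentiableAt one_ne_zero
  have hfw : fderivWithin ℝ Y (closedBall 0 1) x = fderiv ℝ Y x := fderivWithin_of_mem_nhds hnhds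
  have hbij : Function.Bijective (fderiv ℝ Y x) := hfw ▸ hloc x (ball_subset_closedBall hx)
  let e : E2 ≃L[ℝ] E2 :=
    (LinearEquiv.ofBijective (fderiv ℝ Y x).toLinearMap hbij).toContinuousLinearEquiv
  have he : (e : E2 →L[ℝ] E2) = fderiv ℝ Y x := by ext v; rfl
  have hfd : HasFDerivAt Y (e : E2 →L[ℝ] E2) x := he ▸ hdiff.hasFDerivAt
  let h := hca.toOpenPartialHomeomorph Y hfd one_ne_zero
  refine ⟨h.source ∩ ball 0 1, h.open_source.inter isOpen_ball,
    ⟨hca.mem_toOpenPartialHomeomorph_source hfd one_ne_zero, hx⟩, inter_subset_right, ?_, ?_⟩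
  · have := h.injOn
    rw [hca.toOpenPartialHomeomorph_coe hfd one_ne_zero] at this
    exact this.mono inter_subset_left
  · intro W hW hWo
    have : Y '' W = h '' W := by
      rw [hca.toOpenPartialHomeomorph_coe hfd one_ne_zero]
    rw [this]
    exact h.isOpen_image_of_subset_source hWo (hW.trans inter_subset_left)

theorem escape (Y : E2 → E2) (hY : ContDiffOn ℝ 1 Y (closedBall 0 1))
    (hloc : ∀ p ∈ closedBall (0 : E2) 1, Function.Bijective (fderivWithin ℝ Y (closedBall 0 1) p))
    (x : E2) (hx : x ∈ ball (0:E2) 1) (hq : Y x ≠ 0) :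
    ∃ x' ∈ closedBall (0:E2) 1, ‖Y x‖ < ‖Y x'‖ := by
  obtain ⟨V, hVo, hxV, hVB, -, himg⟩ := localStruct Y hY hloc x hx
  have hmem : Y '' V ∈ nhds (Y x) := (himg V subset_rfl hVo).mem_nhds ⟨x, hxV, rfl⟩
  have hcont : Filter.Tendsto (fun t : ℝ => (1 + t) • Y x) (nhds 0) (nhds (Y x)) := by
    have : Continuous (fun t : ℝ => (1 + t) • Y x) := by continuity
    simpa using this.tendsto 0
  have hev : ∀ᶠ t : ℝ in nhdsWithin 0 (Set.Ioi 0), (1 + t) • Y x ∈ Y '' V :=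
    (hcont.mono_left nhdsWithin_le_nhds).eventually_mem hmem
  obtain ⟨t, ht, htpos⟩ := (hev.and self_mem_nhdsWithin).exists
  obtain ⟨x', hx'V, hx'⟩ := ht
  refine ⟨x', ball_subset_closedBall (hVB hx'V), ?_⟩
  rw [hx', norm_smul]
  have h1 : (1:ℝ) < 1 + t := by linarith [htpos]
  have := norm_pos_iff.mpr hq
  calc ‖Y x‖ = 1 * ‖Y x‖ := (one_mul _).symm
    _ < ‖1 + t‖ * ‖Y x‖ := by
        apply mul_lt_mul_of_pos_right _ this
        rw [Real.norm_eq_abs, abs_of_pos (by linarith)]; exact h1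

theorem mapsToD (Y : E2 → E2) (hY : ContDiffOn ℝ 1 Y (closedBall 0 1))
    (hloc : ∀ p ∈ closedBall (0 : E2) 1, Function.Bijective (fderivWithin ℝ Y (closedBall 0 1) p))
    (hbd : ∀ p ∈ sphere (0 : E2) 1, Y p = p) :
    ∀ x ∈ closedBall (0:E2) 1, Y x ∈ closedBall (0:E2) 1 := by
  have hcomp : IsCompact (closedBall (0:E2) 1) := isCompact_closedBall 0 1
  obtain ⟨x₀, hx₀, hmax⟩ := hcomp.exists_isMaxOn ⟨0, mem_closedBall_self zero_le_one⟩
    (hY.continuousOn.norm)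
  by_cases h1 : ‖Y x₀‖ ≤ 1
  · intro x hx
    rw [mem_closedBall, dist_zero_right]
    exact le_trans (hmax hx) h1
  · exfalso
    push_neg at h1
    have hx₀B : x₀ ∈ ball (0:E2) 1 := by
      rcases lt_or_eq_of_le (mem_closedBall.mp hx₀) with h | h
      · rwa [mem_ball]
      · exfalso
        have : Y x₀ = x₀ := hbd x₀ (by rwa [mem_sphere])
        rw [this] at h1
        rw [dist_zero_right] at h
        linarith
    obtain ⟨x', hx', hlt⟩ := escape Y hY hloc x₀ hx₀B (by intro h; rw [h, norm_zero] at h1; linarith)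
    exact absurd (hmax hx') (not_le.mpr hlt)

theorem interiorToBall (Y : E2 → E2) (hY : ContDiffOn ℝ 1 Y (closedBall 0 1))
    (hloc : ∀ p ∈ closedBall (0 : E2) 1, Function.Bijective (fderivWithin ℝ Y (closedBall 0 1) p))
    (hbd : ∀ p ∈ sphere (0 : E2) 1, Y p = p) :
    ∀ x ∈ ball (0:E2) 1, Y x ∈ ball (0:E2) 1 := by
  intro x hx
  have hle : ‖Y x‖ ≤ 1 := by
    have := mapsToD Y hY hloc hbd x (ball_subset_closedBall hx)
    rwa [mem_closedBall, dist_zero_right] at this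
  rcases lt_or_eq_of_le hle with h | h
  · rwa [mem_ball, dist_zero_right]
  · exfalso
    obtain ⟨x', hx', hlt⟩ := escape Y hY hloc x hx (by intro h0; rw [h0, norm_zero] at h; linarith)
    have := mapsToD Y hY hloc hbd x' hx'
    rw [mem_closedBall, dist_zero_right] at this
    rw [h] at hlt
    linarith

theorem ball_of_closedBall_preim (Y : E2 → E2)
    (hbd : ∀ p ∈ sphere (0 : E2) 1, Y p = p)
    {x : E2} (hx : x ∈ closedBall (0:E2) 1) {q : E2} (hq : q ∈ ball (0:E2) 1)
    (hxq : Y x = q) : x ∈ ball (0:E2) 1 := by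
  rcases lt_or_eq_of_le (mem_closedBall.mp hx) with h | h
  · rwa [mem_ball]
  · exfalso
    have hs : x ∈ sphere (0:E2) 1 := by rwa [mem_sphere]
    have : Y x = x := hbd x hs
    rw [hxq] at this
    rw [this, mem_ball, dist_zero_right] at hq
    rw [mem_sphere, dist_zero_right] at hs
    rw [hs] at hq
    exact lt_irrefl 1 hq

theorem surjBall (Y : E2 → E2) (hY : ContDiffOn ℝ 1 Y (closedBall 0 1))
    (hloc : ∀ p ∈ closedBall (0 : E2) 1, Function.Bijective (fderivWithin ℝ Y (closedBall 0 1) p))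
    (hbd : ∀ p ∈ sphere (0 : E2) 1, Y p = p) :
    ball (0:E2) 1 ⊆ Y '' ball (0:E2) 1 := by
  have hcomp : IsCompact (Y '' closedBall (0:E2) 1) :=
    (isCompact_closedBall 0 1).image_of_continuousOn hY.continuousOn
  have huo : IsOpen (Y '' ball (0:E2) 1) := by
    rw [isOpen_iff_forall_mem_open]
    rintro q ⟨x, hx, rfl⟩
    obtain ⟨V, hVo, hxV, hVB, -, himg⟩ := localStruct Y hY hloc x hx
    exact ⟨Y '' V, image_mono hVB, himg V subset_rfl hVo, ⟨x, hxV, rfl⟩⟩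
  have hvo : IsOpen (Y '' closedBall (0:E2) 1)ᶜ := hcomp.isClosed.isOpen_compl
  refine IsPreconnected.subset_left_of_subset_union huo hvo ?_ ?_ ?_
    (convex_ball (0:E2) 1).isPreconnected
  · rw [disjoint_compl_right_iff_subset]
    exact image_mono ball_subset_closedBall
  · intro q hq
    by_cases h : q ∈ Y '' closedBall (0:E2) 1
    · obtain ⟨x, hx, rfl⟩ := h
      exact Or.inl ⟨x, ball_of_closedBall_preim Y hbd hx hq rfl, rfl⟩
    · exact Or.inr h
  · exact ⟨Y 0, interiorToBall Y hY hloc hbd 0 (mem_ball_self one_pos),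
      ⟨0, mem_ball_self one_pos, rfl⟩⟩

theorem uniqueDiffD : UniqueDiffOn ℝ (closedBall (0:E2) 1) :=
  uniqueDiffOn_convex (convex_closedBall 0 1)
    (by rw [interior_closedBall (0:E2) one_ne_zero]; exact ⟨0, mem_ball_self one_pos⟩)

theorem locInj (Y : E2 → E2) (hY : ContDiffOn ℝ 1 Y (closedBall 0 1))
    (hloc : ∀ p ∈ closedBall (0 : E2) 1, Function.Bijective (fderivWithin ℝ Y (closedBall 0 1) p))
    (p : E2) (hp : p ∈ closedBall (0:E2) 1) :
    ∃ δ > 0, Set.InjOn Y (closedBall (0:E2) 1 ∩ ball p δ) := by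
  set D := closedBall (0:E2) 1 with hD
  set A := fderivWithin ℝ Y D p with hA
  let e : E2 ≃L[ℝ] E2 := (LinearEquiv.ofBijective A.toLinearMap (hloc p hp)).toContinuousLinearEquiv
  have he : (e : E2 →L[ℝ] E2) = A := by ext v; rfl
  set K := ‖(e.symm : E2 →L[ℝ] E2)‖ with hK
  have hK0 : 0 ≤ K := norm_nonneg _
  set ε := (2 * (K + 1))⁻¹ with hε
  have hε0 : 0 < ε := by positivity
  have hcont : ContinuousOn (fderivWithin ℝ Y D) D :=
    hY.continuousOn_fderivWithin uniqueDiffD le_rfl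
  have hcwa := (hcont p hp).tendsto
  rw [Metric.tendsto_nhds] at hcwa
  have hev := hcwa ε hε0
  rw [Filter.eventually_iff_exists_mem] at hev
  obtain ⟨u, hu, hball⟩ := hev
  rw [mem_nhdsWithin_iff] at hu
  obtain ⟨δ, hδ0, hδ⟩ := hu
  refine ⟨δ, hδ0, ?_⟩
  intro x hx y hy hxy
  set s := D ∩ ball p δ with hs
  have hconv : Convex ℝ s := (convex_closedBall 0 1).inter (convex_ball p δ)
  have hdiff : DifferentiableOn ℝ Y s :=
    (hY.differentiableOn one_ne_zero).mono inter_subset_left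
  have hbound : ∀ z ∈ s, ‖fderivWithin ℝ Y s z - A‖ ≤ ε := by
    intro z hz
    have h1 : fderivWithin ℝ Y s z = fderivWithin ℝ Y D z :=
      fderivWithin_inter (isOpen_ball.mem_nhds hz.2)
    have h2 : z ∈ ball p δ ∩ D := ⟨hz.2, hz.1⟩
    have := hball z (hδ h2)
    rw [dist_eq_norm] at this
    rw [h1]
    exact le_of_lt this
  have key := hconv.norm_image_sub_le_of_norm_fderivWithin_le' hdiff hbound hx hy
  rw [hxy, sub_self, zero_sub, norm_neg] at key
  have h3 : ‖y - x‖ ≤ K * ‖A (y - x)‖ := by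
    have h4 : e.symm (e (y - x)) = y - x := e.symm_apply_apply _
    have h5 : ‖e.symm (e (y - x))‖ ≤ K * ‖e (y - x)‖ :=
      (e.symm : E2 →L[ℝ] E2).le_opNorm (e (y - x))
    rw [h4] at h5
    have h6 : e (y - x) = A (y - x) := by rw [← he]; rfl
    rwa [h6] at h5
  have h7 : ‖y - x‖ ≤ K * (ε * ‖y - x‖) := h3.trans (by
    apply mul_le_mul_of_nonneg_left key hK0)
  have h8 : ε * (2 * (K + 1)) = 1 := by
    rw [hε]; field_simp
  have h9 : ‖y - x‖ = 0 := by nlinarith [norm_nonneg (y - x)]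
  have : y - x = 0 := norm_eq_zero.mp h9
  have : y = x := by rwa [sub_eq_zero] at this
  exact this.symm

theorem exists_singleton_fiber (Y : E2 → E2) (hY : ContDiffOn ℝ 1 Y (closedBall 0 1))
    (hloc : ∀ p ∈ closedBall (0 : E2) 1, Function.Bijective (fderivWithin ℝ Y (closedBall 0 1) p))
    (hbd : ∀ p ∈ sphere (0 : E2) 1, Y p = p) :
    ∃ q ∈ ball (0:E2) 1, ∀ x ∈ closedBall (0:E2) 1, ∀ y ∈ closedBall (0:E2) 1,
      Y x = q → Y y = q → x = y := by
  set p : E2 := EuclideanSpace.single 0 (1:ℝ) with hp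
  have hpn : ‖p‖ = 1 := by rw [hp, EuclideanSpace.norm_single]; norm_num
  have hpS : p ∈ sphere (0:E2) 1 := by rwa [mem_sphere, dist_zero_right]
  have hpD : p ∈ closedBall (0:E2) 1 := sphere_subset_closedBall hpS
  obtain ⟨δ, hδ0, hinj⟩ := locInj Y hY hloc p hpD
  set q : ℕ → E2 := fun n => (1 - ((n:ℝ) + 2)⁻¹) • p with hqdef
  have hcoef : ∀ n : ℕ, 0 < (1 - ((n:ℝ) + 2)⁻¹) ∧ (1 - ((n:ℝ) + 2)⁻¹) < 1 := by
    intro n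
    have h2 : (0:ℝ) < (n:ℝ) + 2 := by positivity
    constructor
    · have : ((n:ℝ) + 2)⁻¹ ≤ 2⁻¹ := by
        apply inv_anti₀ (by norm_num)
        have : (0:ℝ) ≤ (n:ℝ) := Nat.cast_nonneg n
        linarith
      linarith
    · have : 0 < ((n:ℝ) + 2)⁻¹ := by positivity
      linarith
  have hqball : ∀ n, q n ∈ ball (0:E2) 1 := by
    intro n
    rw [mem_ball, dist_zero_right, hqdef, norm_smul, hpn, mul_one, Real.norm_eq_abs,
      abs_of_pos (hcoef n).1]
    exact (hcoef n).2
  have hqtend : Filter.Tendsto q Filter.atTop (nhds p) := by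
    have h0 : Filter.Tendsto (fun n : ℕ => ((n:ℝ) + 2)⁻¹) Filter.atTop (nhds 0) :=
      tendsto_inv_atTop_zero.comp
        (Filter.tendsto_atTop_add_const_right _ 2 tendsto_natCast_atTop_atTop)
    have h1 : Filter.Tendsto (fun n : ℕ => 1 - ((n:ℝ) + 2)⁻¹) Filter.atTop (nhds 1) := by
      simpa using (tendsto_const_nhds (x := (1:ℝ))).sub h0
    simpa using h1.smul_const p
  -- claim: some q n has all preimages in ball p δ
  by_cases hcl : ∃ n : ℕ, ∀ x ∈ closedBall (0:E2) 1 \ ball p δ, Y x ≠ q n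
  · obtain ⟨n, hn⟩ := hcl
    refine ⟨q n, hqball n, ?_⟩
    intro x hx y hy hxq hyq
    have hxb : x ∈ ball p δ := by
      by_contra hxb
      exact hn x ⟨hx, hxb⟩ hxq
    have hyb : y ∈ ball p δ := by
      by_contra hyb
      exact hn y ⟨hy, hyb⟩ hyq
    exact hinj ⟨hx, hxb⟩ ⟨hy, hyb⟩ (hxq.trans hyq.symm)
  · exfalso
    push_neg at hcl
    choose x hxmem hxq using hcl
    have hKcomp : IsCompact (closedBall (0:E2) 1 \ ball p δ) :=
      (isCompact_closedBall 0 1).diff isOpen_ball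
    obtain ⟨z, hz, φ, hφ, hzt⟩ := hKcomp.tendsto_subseq hxmem
    have hzD : z ∈ closedBall (0:E2) 1 := hz.1
    have hYz : Y z = p := by
      have hc : Filter.Tendsto (Y ∘ x ∘ φ) Filter.atTop (nhds (Y z)) := by
        apply ((hY.continuousOn z hzD).tendsto).comp
        rw [tendsto_nhdsWithin_iff]
        exact ⟨hzt, Filter.Eventually.of_forall fun n => (hxmem (φ n)).1⟩
      have hc2 : Filter.Tendsto (Y ∘ x ∘ φ) Filter.atTop (nhds p) := by
        have : (Y ∘ x ∘ φ) = (q ∘ φ) := by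
          funext n; exact hxq (φ n)
        rw [this]
        exact hqtend.comp hφ.tendsto_atTop
      exact tendsto_nhds_unique hc hc2
    have hzS : z ∈ sphere (0:E2) 1 := by
      rcases lt_or_eq_of_le (mem_closedBall.mp hzD) with h | h
      · exfalso
        have := interiorToBall Y hY hloc hbd z (by rwa [mem_ball])
        rw [hYz, mem_ball, dist_zero_right, hpn] at this
        exact lt_irrefl 1 this
      · rwa [mem_sphere]
    have : z = p := by rw [← hbd z hzS, hYz]
    have hzb : z ∉ ball p δ := hz.2
    rw [this] at hzb
    exact hzb (mem_ball_self hδ0)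

theorem multiNbhd (Y : E2 → E2) (hY : ContDiffOn ℝ 1 Y (closedBall 0 1))
    (hloc : ∀ p ∈ closedBall (0 : E2) 1, Function.Bijective (fderivWithin ℝ Y (closedBall 0 1) p))
    (hbd : ∀ p ∈ sphere (0 : E2) 1, Y p = p) {q : E2} (hq : q ∈ ball (0:E2) 1)
    {x y : E2} (hx : x ∈ closedBall (0:E2) 1) (hy : y ∈ closedBall (0:E2) 1)
    (hne : x ≠ y) (hxq : Y x = q) (hyq : Y y = q) :
    ∃ t : Set E2, IsOpen t ∧ q ∈ t ∧ ∀ q' ∈ t,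
      ∃ x' ∈ closedBall (0:E2) 1, ∃ y' ∈ closedBall (0:E2) 1, x' ≠ y' ∧ Y x' = q' ∧ Y y' = q' := by
  have hxB : x ∈ ball (0:E2) 1 := ball_of_closedBall_preim Y hbd hx hq hxq
  have hyB : y ∈ ball (0:E2) 1 := ball_of_closedBall_preim Y hbd hy hq hyq
  obtain ⟨Vx, hVxo, hxVx, hVxB, hVxinj, hVximg⟩ := localStruct Y hY hloc x hxB
  obtain ⟨Vy, hVyo, hyVy, hVyB, hVyinj, hVyimg⟩ := localStruct Y hY hloc y hyB
  obtain ⟨Ux, Uy, hUxo, hUyo, hxUx, hyUy, hdisj⟩ := t2_separation hne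
  refine ⟨Y '' (Vx ∩ Ux) ∩ Y '' (Vy ∩ Uy),
    (hVximg _ inter_subset_left (hVxo.inter hUxo)).inter
      (hVyimg _ inter_subset_left (hVyo.inter hUyo)),
    ⟨⟨x, ⟨hxVx, hxUx⟩, hxq⟩, ⟨y, ⟨hyVy, hyUy⟩, hyq⟩⟩, ?_⟩
  rintro q' ⟨⟨x', hx', rfl⟩, ⟨y', hy', hy'q⟩⟩
  refine ⟨x', ball_subset_closedBall (hVxB hx'.1), y', ball_subset_closedBall (hVyB hy'.1),
    ?_, rfl, hy'q⟩
  intro h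
  rw [h] at hx'
  exact (Set.disjoint_left.mp hdisj hx'.2) hy'.2

theorem singleNbhd (Y : E2 → E2) (hY : ContDiffOn ℝ 1 Y (closedBall 0 1))
    (hloc : ∀ p ∈ closedBall (0 : E2) 1, Function.Bijective (fderivWithin ℝ Y (closedBall 0 1) p))
    (hbd : ∀ p ∈ sphere (0 : E2) 1, Y p = p) {q : E2} (hq : q ∈ ball (0:E2) 1)
    (hsing : ∀ x ∈ closedBall (0:E2) 1, ∀ y ∈ closedBall (0:E2) 1, Y x = q → Y y = q → x = y) :
    ∃ t : Set E2, IsOpen t ∧ q ∈ t ∧ ∀ q' ∈ t,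
      ∀ x ∈ closedBall (0:E2) 1, ∀ y ∈ closedBall (0:E2) 1, Y x = q' → Y y = q' → x = y := by
  obtain ⟨x, hxB, hxq⟩ := surjBall Y hY hloc hbd hq
  obtain ⟨V, hVo, hxV, hVB, hVinj, hVimg⟩ := localStruct Y hY hloc x hxB
  have hCcomp : IsCompact (Y '' (closedBall (0:E2) 1 \ V)) :=
    ((isCompact_closedBall 0 1).diff hVo).image_of_continuousOn
      (hY.continuousOn.mono diff_subset)
  have hqC : q ∉ Y '' (closedBall (0:E2) 1 \ V) := by
    rintro ⟨z, hz, hzq⟩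
    exact hz.2 (hsing z hz.1 x (ball_subset_closedBall hxB) hzq hxq ▸ hxV)
  refine ⟨Y '' V ∩ (Y '' (closedBall (0:E2) 1 \ V))ᶜ,
    (hVimg V subset_rfl hVo).inter hCcomp.isClosed.isOpen_compl,
    ⟨⟨x, hxV, hxq⟩, hqC⟩, ?_⟩
  rintro q' ⟨hq'V, hq'C⟩ a ha b hb haq hbq
  have haV : a ∈ V := by
    by_contra h
    exact hq'C ⟨a, ⟨ha, h⟩, haq⟩
  have hbV : b ∈ V := by
    by_contra h
    exact hq'C ⟨b, ⟨hb, h⟩, hbq⟩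
  exact hVinj haV hbV (haq.trans hbq.symm)

theorem injBall (Y : E2 → E2) (hY : ContDiffOn ℝ 1 Y (closedBall 0 1))
    (hloc : ∀ p ∈ closedBall (0 : E2) 1, Function.Bijective (fderivWithin ℝ Y (closedBall 0 1) p))
    (hbd : ∀ p ∈ sphere (0 : E2) 1, Y p = p) :
    ∀ q ∈ ball (0:E2) 1, ∀ x ∈ closedBall (0:E2) 1, ∀ y ∈ closedBall (0:E2) 1,
      Y x = q → Y y = q → x = y := by
  set Sing : Set E2 := {q | ∀ x ∈ closedBall (0:E2) 1, ∀ y ∈ closedBall (0:E2) 1,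
    Y x = q → Y y = q → x = y} with hSing
  set Mult : Set E2 := {q | ∃ x ∈ closedBall (0:E2) 1, ∃ y ∈ closedBall (0:E2) 1,
    x ≠ y ∧ Y x = q ∧ Y y = q} with hMult
  set u : Set E2 := ball (0:E2) 1 ∩ Sing with hu
  set v : Set E2 := ball (0:E2) 1 ∩ Mult with hv
  have huo : IsOpen u := by
    rw [isOpen_iff_forall_mem_open]
    rintro q ⟨hqB, hqS⟩
    obtain ⟨t, hto, hqt, ht⟩ := singleNbhd Y hY hloc hbd hqB hqS
    exact ⟨t ∩ ball 0 1, fun q' hq' => ⟨hq'.2, ht q' hq'.1⟩, hto.inter isOpen_ball, hqt, hqB⟩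
  have hvo : IsOpen v := by
    rw [isOpen_iff_forall_mem_open]
    rintro q ⟨hqB, x, hx, y, hy, hne, hxq, hyq⟩
    obtain ⟨t, hto, hqt, ht⟩ := multiNbhd Y hY hloc hbd hqB hx hy hne hxq hyq
    exact ⟨t ∩ ball 0 1, fun q' hq' => ⟨hq'.2, ht q' hq'.1⟩, hto.inter isOpen_ball, hqt, hqB⟩
  have hdisj : Disjoint u v := by
    rw [Set.disjoint_left]
    rintro q ⟨-, hqS⟩ ⟨-, x, hx, y, hy, hne, hxq, hyq⟩
    exact hne (hqS x hx y hy hxq hyq)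
  have hcover : ball (0:E2) 1 ⊆ u ∪ v := by
    intro q hq
    by_cases h : q ∈ Sing
    · exact Or.inl ⟨hq, h⟩
    · refine Or.inr ⟨hq, ?_⟩
      rw [hSing, Set.mem_setOf_eq] at h
      push_neg at h
      obtain ⟨x, hx, y, hy, hxq, hyq, hne⟩ := h
      exact ⟨x, hx, y, hy, hne, hxq, hyq⟩
  have hne : (ball (0:E2) 1 ∩ u).Nonempty := by
    obtain ⟨q, hqB, hq⟩ := exists_singleton_fiber Y hY hloc hbd
    exact ⟨q, hqB, hqB, hq⟩
  have := (convex_ball (0:E2) 1).isPreconnected.subset_left_of_subset_union huo hvo hdisj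
    hcover hne
  intro q hq
  exact (this hq).2

/-- A local `C¹` diffeomorphism `Y : D → ℝ²` of the closed unit disk
(differential invertible at every point) restricting to the identity on `∂D`
is a global diffeomorphism of `D` onto `D`. -/
theorem stmt_3 (Y : EuclideanSpace ℝ (Fin 2) → EuclideanSpace ℝ (Fin 2))
    (hY : ContDiffOn ℝ 1 Y (closedBall 0 1))
    (hloc : ∀ p ∈ closedBall (0 : EuclideanSpace ℝ (Fin 2)) 1,
      Function.Bijective (fderivWithin ℝ Y (closedBall 0 1) p))
    (hbd : ∀ p ∈ sphere (0 : EuclideanSpace ℝ (Fin 2)) 1, Y p = p) :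
    Set.BijOn Y (closedBall 0 1) (closedBall 0 1) := by
  refine ⟨mapsToD Y hY hloc hbd, ?_, ?_⟩
  · -- InjOn
    intro x hx y hy hxy
    rcases lt_or_eq_of_le (mem_closedBall.mp hx) with hxb | hxs
    · have hxB : x ∈ ball (0:E2) 1 := by rwa [mem_ball]
      have hYxB : Y x ∈ ball (0:E2) 1 := interiorToBall Y hY hloc hbd x hxB
      exact injBall Y hY hloc hbd (Y x) hYxB x hx y hy rfl hxy.symm
    · have hxS : x ∈ sphere (0:E2) 1 := by rwa [mem_sphere]
      have hYx : Y x = x := hbd x hxS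
      rcases lt_or_eq_of_le (mem_closedBall.mp hy) with hyb | hys
    -- y interior: contradiction
      · exfalso
        have hYyB : Y y ∈ ball (0:E2) 1 := interiorToBall Y hY hloc hbd y (by rwa [mem_ball])
        rw [← hxy, hYx, mem_ball, dist_zero_right] at hYyB
        rw [mem_sphere, dist_zero_right] at hxS
        rw [hxS] at hYyB
        exact lt_irrefl 1 hYyB
      · have hyS : y ∈ sphere (0:E2) 1 := by rwa [mem_sphere]
        have hYy : Y y = y := hbd y hyS
        rw [← hYx, ← hYy, hxy]
  · -- SurjOn
    intro q hq
    rcases lt_or_eq_of_le (mem_closedBall.mp hq) with hqb | hqs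
    · obtain ⟨x, hxB, hxq⟩ := surjBall Y hY hloc hbd (by rwa [mem_ball])
      exact ⟨x, ball_subset_closedBall hxB, hxq⟩
    · exact ⟨q, hq, hbd q (by rwa [mem_sphere])⟩
end

section
/- Let u : ℝ² → ℝ be the radial function centered at a point c, defined by u(ρ) = ε for ρ ≤ 1, u(ρ) = −ε·ln(ρ/(1+r))/ln(1+r) for 1 ≤ ρ ≤ 1+r, and u(ρ) = 0 for ρ ≥ 1+r, where ρ is the distance to c and r, ε > 0. Then the area of the graph of u over the annulus 1 ≤ ρ ≤ 1+r satisfies 2π ∫₁^{1+r} √(1 + u'(ρ)²) ρ dρ ≤ π((1+r)² − 1) + 2π ε²/ln(1+r). -/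
open Real

/-- For the radial logarithmic cutoff function `u` with
`u'(ρ) = −ε/(ρ ln(1+r))` on the annulus `1 ≤ ρ ≤ 1+r`, the area of its graph over the
annulus satisfies `2π ∫₁^{1+r} √(1 + u'(ρ)²) ρ dρ ≤ π((1+r)² − 1) + 2π ε²/ln(1+r)`. -/
theorem stmt_9 (r ε : ℝ) (hr : 0 < r) (hε : 0 < ε) :
    2 * π * ∫ ρ in (1:ℝ)..(1 + r),
        Real.sqrt (1 + (ε / (ρ * Real.log (1 + r)))^2) * ρ ≤
      π * ((1 + r)^2 - 1) + 2 * π * ε^2 / Real.log (1 + r) := by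
  set L := Real.log (1 + r) with hLdef
  have hL : 0 < L := Real.log_pos (by linarith)
  have hab : (1:ℝ) ≤ 1 + r := by linarith
  -- integrability of the sqrt integrand
  have hcont : ContinuousOn (fun ρ : ℝ =>
      Real.sqrt (1 + (ε / (ρ * L))^2) * ρ) (Set.uIcc 1 (1+r)) := by
    apply ContinuousOn.mul _ continuous_id.continuousOn
    apply Real.continuous_sqrt.comp_continuousOn
    apply ContinuousOn.add continuousOn_const
    apply ContinuousOn.pow
    apply ContinuousOn.div continuousOn_const
    · exact (continuousOn_id.mul continuousOn_const)
    · intro x hx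
      rw [Set.uIcc_of_le hab] at hx
      have : (1:ℝ) ≤ x := hx.1
      positivity
  have hint1 : IntervalIntegrable (fun ρ : ℝ =>
      Real.sqrt (1 + (ε / (ρ * L))^2) * ρ) MeasureTheory.volume 1 (1+r) :=
    hcont.intervalIntegrable
  have hinv : IntervalIntegrable (fun ρ : ℝ => ρ⁻¹) MeasureTheory.volume 1 (1+r) := by
    apply ContinuousOn.intervalIntegrable
    apply ContinuousOn.inv₀ continuous_id.continuousOn
    intro x hx
    rw [Set.uIcc_of_le hab] at hx
    have : (1:ℝ) ≤ x := hx.1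
    intro h; simp only [id] at h; linarith
  have hid : IntervalIntegrable (fun ρ : ℝ => ρ) MeasureTheory.volume 1 (1+r) :=
    continuous_id.intervalIntegrable _ _
  have hint2 : IntervalIntegrable (fun ρ : ℝ => ρ + ε^2 / L^2 * ρ⁻¹)
      MeasureTheory.volume 1 (1+r) :=
    hid.add (hinv.const_mul _)
  have hmono : ∫ ρ in (1:ℝ)..(1 + r), Real.sqrt (1 + (ε / (ρ * L))^2) * ρ ≤
      ∫ ρ in (1:ℝ)..(1 + r), (ρ + ε^2 / L^2 * ρ⁻¹) := by
    apply intervalIntegral.integral_mono_on hab hint1 hint2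
    intro x hx
    have hx1 : (1:ℝ) ≤ x := hx.1
    have hx0 : (0:ℝ) < x := by linarith
    have key : Real.sqrt (1 + (ε / (x * L))^2) ≤ 1 + (ε / (x * L))^2 := by
      nlinarith [sq_nonneg (ε / (x * L)), Real.sq_sqrt (by positivity : (0:ℝ) ≤ 1 + (ε / (x * L))^2),
        Real.sqrt_nonneg (1 + (ε / (x * L))^2)]
    have : Real.sqrt (1 + (ε / (x * L))^2) * x ≤ (1 + (ε / (x * L))^2) * x :=
      mul_le_mul_of_nonneg_right key (le_of_lt hx0)
    refine this.trans_eq ?_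
    field_simp
  have hval : ∫ ρ in (1:ℝ)..(1 + r), (ρ + ε^2 / L^2 * ρ⁻¹) =
      ((1+r)^2 - 1)/2 + ε^2 / L := by
    rw [intervalIntegral.integral_add hid (hinv.const_mul _)]
    rw [intervalIntegral.integral_const_mul, integral_id,
      integral_inv (by rw [Set.uIcc_of_le hab]; intro h; linarith [h.1])]
    rw [div_one]
    field_simp
    ring
  have hπ : (0:ℝ) < π := Real.pi_pos
  calc 2 * π * ∫ ρ in (1:ℝ)..(1 + r), Real.sqrt (1 + (ε / (ρ * L))^2) * ρ
      ≤ 2 * π * (((1+r)^2 - 1)/2 + ε^2 / L) := by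
        apply mul_le_mul_of_nonneg_left _ (by positivity)
        rw [← hval]; exact hmono
    _ = π * ((1 + r)^2 - 1) + 2 * π * ε^2 / L := by field_simp
end
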